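/- Let D > 1, ρ ∈ (0,1) and M > 0 with M ≤ D − 1. Let (u_k)_{k≥0} be a sequence of nonnegative real numbers such that u_0 ≤ D and u_k ≤ M·∑_{t=1}^{k} ρ^{t}·u_{k−t} for every k ≥ 1. Then u_k ≤ D·(Dρ)^{k} for every k ≥ 0. -/

import Mathlib

/-- Recursive estimate at the core of the induction in Lemma Z₁. -/
theorem recursive_geometric_bound (D ρ M : ℝ) (hD : 1 < D) (hρ : ρ ∈ Set.Ioo (0 : ℝ) 1)
    (hM : 0 < M) (hMD : M ≤ D - 1) (u : ℕ → ℝ)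
    (hu0 : ∀ k, 0 ≤ u k) (hu : u 0 ≤ D)
    (hrec : ∀ k, 1 ≤ k → u k ≤ M * ∑ t ∈ Finset.Icc 1 k, ρ ^ t * u (k - t)) :
    ∀ k, u k ≤ D * (D * ρ) ^ k := by
  obtain ⟨hρ0, hρ1⟩ := hρ
  have hD0 : (0:ℝ) < D := lt_trans one_pos hD
  intro k
  induction k using Nat.strong_induction_on with
  | _ k ih =>
    rcases Nat.eq_zero_or_pos k with rfl | hk
    · simpa using hu
    have step1 : u k ≤ M * ∑ t ∈ Finset.Icc 1 k, ρ ^ t * u (k - t) := hrec k hk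
    have step2 : ∑ t ∈ Finset.Icc 1 k, ρ ^ t * u (k - t)
        ≤ ∑ t ∈ Finset.Icc 1 k, ρ ^ t * (D * (D * ρ) ^ (k - t)) := by
      apply Finset.sum_le_sum
      intro t ht
      have ht1 : 1 ≤ t := (Finset.mem_Icc.mp ht).1
      have : k - t < k := by omega
      exact mul_le_mul_of_nonneg_left (ih _ this) (le_of_lt (pow_pos hρ0 t))
    have eq3 : ∑ t ∈ Finset.Icc 1 k, ρ ^ t * (D * (D * ρ) ^ (k - t))
        = D * ρ ^ k * ∑ j ∈ Finset.range k, D ^ j := by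
      rw [Finset.mul_sum]
      refine Finset.sum_nbij' (fun t => k - t) (fun j => k - j) ?_ ?_ ?_ ?_ ?_
      · intro t ht
        simp only [Finset.mem_Icc] at ht
        simp only [Finset.mem_range]; omega
      · intro j hj
        simp only [Finset.mem_range] at hj
        simp only [Finset.mem_Icc]; omega
      · intro t ht; simp only [Finset.mem_Icc] at ht; show k - (k - t) = t; omega
      · intro j hj; simp only [Finset.mem_range] at hj; show k - (k - j) = j; omega
      · intro t ht
        simp only [Finset.mem_Icc] at ht
        have : ρ ^ k = ρ ^ t * ρ ^ (k - t) := by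
          rw [← pow_add]; congr 1; omega
        rw [mul_pow, this]; ring
    have geom : ∑ j ∈ Finset.range k, D ^ j = (D ^ k - 1) / (D - 1) :=
      geom_sum_eq (ne_of_gt hD) k
    have hD1 : (0:ℝ) < D - 1 := by linarith
    have hsum_nonneg : (0:ℝ) ≤ ∑ t ∈ Finset.Icc 1 k, ρ ^ t * (D * (D * ρ) ^ (k - t)) := by
      apply Finset.sum_nonneg
      intro t _
      have := pow_nonneg (mul_nonneg hD0.le hρ0.le) (k - t)
      positivity
    calc u k ≤ M * ∑ t ∈ Finset.Icc 1 k, ρ ^ t * u (k - t) := step1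
      _ ≤ M * ∑ t ∈ Finset.Icc 1 k, ρ ^ t * (D * (D * ρ) ^ (k - t)) :=
          mul_le_mul_of_nonneg_left step2 hM.le
      _ ≤ (D - 1) * ∑ t ∈ Finset.Icc 1 k, ρ ^ t * (D * (D * ρ) ^ (k - t)) :=
          mul_le_mul_of_nonneg_right hMD hsum_nonneg
      _ = (D - 1) * (D * ρ ^ k * ((D ^ k - 1) / (D - 1))) := by rw [eq3, geom]
      _ = D * ρ ^ k * (D ^ k - 1) := by field_simp
      _ ≤ D * ρ ^ k * D ^ k := by
          apply mul_le_mul_of_nonneg_left (by linarith)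
            (mul_nonneg hD0.le (pow_nonneg hρ0.le k))
      _ = D * (D * ρ) ^ k := by rw [mul_pow]; ring
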